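/- Every k-tree G has a nonempty independent set S of k-simplicial vertices such that either (a) G \ S is isomorphic to K_k, or (b) G \ S is a k-tree containing a k-simplicial vertex v such that for each w in S there is exactly one vertex u in the neighbourhood of v in G \ S with N_G(w) = (N_{G\S}(v) ∪ {v}) \ {u}, and moreover every k-simplicial vertex of G not in S is not adjacent to v. -/

import Mathlib

/-- A `k`-tree, defined via a construction ordering: the first `k+1` vertices form a
clique, and each later vertex's neighbourhood among earlier vertices is a `k`-clique. -/
def IsKTree {V : Type*} [Finite V] (k : ℕ) (G : SimpleGraph V) : Prop :=
  k + 1 ≤ Nat.card V ∧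
  ∃ σ : Fin (Nat.card V) ≃ V,
    ∀ i : Fin (Nat.card V),
      (((i : ℕ) ≤ k) →
        {u | G.Adj (σ i) u ∧ ((σ.symm u : Fin (Nat.card V)) : ℕ) < (i : ℕ)} =
          {u | ((σ.symm u : Fin (Nat.card V)) : ℕ) < (i : ℕ)}) ∧
      (k < (i : ℕ) →
        ({u | G.Adj (σ i) u ∧ ((σ.symm u : Fin (Nat.card V)) : ℕ) < (i : ℕ)}.ncard = k ∧
          G.IsClique {u | G.Adj (σ i) u ∧ ((σ.symm u : Fin (Nat.card V)) : ℕ) < (i : ℕ)}))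

/-- A vertex is `k`-simplicial if its neighbourhood is a clique on exactly `k` vertices. -/
def IsKSimplicial {V : Type*} (G : SimpleGraph V) (k : ℕ) (v : V) : Prop :=
  G.IsClique (G.neighborSet v) ∧ (G.neighborSet v).ncard = k

set_option linter.unusedSectionVars false
namespace KTreeAux

open Set

/-- cardinality of an initial segment of `Fin n`. -/
lemma ncard_val_lt {n : ℕ} (c : ℕ) (h : c ≤ n) :
    {a : Fin n | (a : ℕ) < c}.ncard = c := by
  have hset : {a : Fin n | (a : ℕ) < c} = Set.range (Fin.castLE h) := by
    ext a
    constructor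
    · intro ha; exact ⟨⟨a, ha⟩, rfl⟩
    · rintro ⟨b, rfl⟩; exact b.isLt
  rw [hset, ← Nat.card_coe_set_eq, Nat.card_range_of_injective (Fin.castLE_injective h),
    Nat.card_eq_fintype_card, Fintype.card_fin]

variable {V : Type*} [Finite V] {k : ℕ} {G : SimpleGraph V}

/-- Abbreviation for the ordering property in `IsKTree`. -/
abbrev KOrd (k : ℕ) (G : SimpleGraph V) (σ : Fin (Nat.card V) ≃ V) : Prop :=
  ∀ i : Fin (Nat.card V),
    (((i : ℕ) ≤ k) →
      {u | G.Adj (σ i) u ∧ ((σ.symm u : Fin (Nat.card V)) : ℕ) < (i : ℕ)} =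
        {u | ((σ.symm u : Fin (Nat.card V)) : ℕ) < (i : ℕ)}) ∧
    (k < (i : ℕ) →
      ({u | G.Adj (σ i) u ∧ ((σ.symm u : Fin (Nat.card V)) : ℕ) < (i : ℕ)}.ncard = k ∧
        G.IsClique {u | G.Adj (σ i) u ∧ ((σ.symm u : Fin (Nat.card V)) : ℕ) < (i : ℕ)}))

variable {σ : Fin (Nat.card V) ≃ V}

lemma adj_of_lt (h : KOrd k G σ) {i : Fin (Nat.card V)} (hi : (i : ℕ) ≤ k)
    {u : V} (hu : ((σ.symm u : Fin (Nat.card V)) : ℕ) < (i : ℕ)) : G.Adj (σ i) u := by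
  have h1 := (h i).1 hi
  have h2 : u ∈ {u | G.Adj (σ i) u ∧ ((σ.symm u : Fin (Nat.card V)) : ℕ) < (i : ℕ)} := by
    rw [h1]; exact hu
  exact h2.1

lemma block_adj (h : KOrd k G σ) {i j : Fin (Nat.card V)} (hi : (i : ℕ) ≤ k)
    (hj : (j : ℕ) ≤ k) (hij : i ≠ j) : G.Adj (σ i) (σ j) := by
  have hne : (i : ℕ) ≠ (j : ℕ) := fun hc => hij (Fin.ext hc)
  rcases lt_or_gt_of_ne hne with hlt | hlt
  · exact (adj_of_lt h hj (by simpa using hlt)).symm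
  · exact adj_of_lt h hi (by simpa using hlt)

/-- A simplicial vertex has no neighbour later in the ordering, unless that
neighbour is within the first `k+1` vertices. -/
lemma simplicial_forward (h : KOrd k G σ) (hn : k + 1 ≤ Nat.card V)
    {w x : V} (hw : IsKSimplicial G k w) (hadj : G.Adj w x)
    (hlt : ((σ.symm w : Fin (Nat.card V)) : ℕ) < ((σ.symm x : Fin (Nat.card V)) : ℕ)) :
    ((σ.symm x : Fin (Nat.card V)) : ℕ) ≤ k := by
  set i : Fin (Nat.card V) := σ.symm w with hi
  have hσi : σ i = w := σ.apply_symm_apply w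
  by_cases hik : (i : ℕ) ≤ k
  · by_contra hxk
    push_neg at hxk
    set J : Set V := σ '' {j : Fin (Nat.card V) | (j : ℕ) ≤ k ∧ j ≠ i} with hJ
    have hJsub : J ⊆ G.neighborSet w := by
      rintro _ ⟨j, ⟨hjk, hji⟩, rfl⟩
      have := block_adj h hik hjk (fun e => hji e.symm)
      rw [SimpleGraph.mem_neighborSet, ← hσi]
      exact this
    have hJcard : J.ncard = k := by
      rw [hJ, Set.ncard_image_of_injective _ σ.injective]
      have hd : {j : Fin (Nat.card V) | (j : ℕ) ≤ k ∧ j ≠ i} =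
          {j : Fin (Nat.card V) | (j : ℕ) < k + 1} \ {i} := by
        ext j; simp [Nat.lt_succ_iff]
      rw [hd, Set.ncard_diff_singleton_of_mem (by simpa [Nat.lt_succ_iff] using hik),
        ncard_val_lt (k + 1) hn]
      omega
    have hxJ : x ∉ J := by
      rintro ⟨j, ⟨hjk, _⟩, rfl⟩
      simp only [Equiv.symm_apply_apply] at hxk
      omega
    have hins : insert x J ⊆ G.neighborSet w := by
      intro a ha
      rcases ha with rfl | ha
      · exact hadj
      · exact hJsub ha
    have hle : (insert x J).ncard ≤ (G.neighborSet w).ncard :=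
      Set.ncard_le_ncard hins (Set.toFinite _)
    rw [Set.ncard_insert_of_notMem hxJ (Set.toFinite _), hJcard, hw.2] at hle
    omega
  · push_neg at hik
    obtain ⟨hcard, _⟩ := (h i).2 hik
    have hBsub : {u | G.Adj (σ i) u ∧ ((σ.symm u : Fin (Nat.card V)) : ℕ) < (i : ℕ)} ⊆
        G.neighborSet w := fun u hu => by
      rw [SimpleGraph.mem_neighborSet, ← hσi]; exact hu.1
    have heq := Set.eq_of_subset_of_ncard_le hBsub (by rw [hw.2, hcard]) (Set.toFinite _)
    have hxB : x ∈ {u | G.Adj (σ i) u ∧ ((σ.symm u : Fin (Nat.card V)) : ℕ) < (i : ℕ)} := by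
      rw [heq]; exact hadj
    exact absurd hxB.2 (by omega)

/-- When `n ≥ k+2`, simplicial vertices form an independent set. -/
lemma simplicial_indep (h : KOrd k G σ) (hn : k + 2 ≤ Nat.card V)
    {w w' : V} (hw : IsKSimplicial G k w) (hw' : IsKSimplicial G k w')
    (hadj : G.Adj w w') : False := by
  suffices haux : ∀ a b : V, IsKSimplicial G k a → IsKSimplicial G k b → G.Adj a b →
      ((σ.symm a : Fin (Nat.card V)) : ℕ) < ((σ.symm b : Fin (Nat.card V)) : ℕ) → False by
    have hne : ((σ.symm w : Fin (Nat.card V)) : ℕ) ≠ ((σ.symm w' : Fin (Nat.card V)) : ℕ) := by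
      intro hc
      exact G.ne_of_adj hadj (by
        have : σ.symm w = σ.symm w' := Fin.ext hc
        simpa using congrArg σ this)
    rcases lt_or_gt_of_ne hne with hlt | hlt
    · exact haux w w' hw hw' hadj hlt
    · exact haux w' w hw' hw hadj.symm hlt
  intro a b ha hb hab hlt
  have hbk : ((σ.symm b : Fin (Nat.card V)) : ℕ) ≤ k := simplicial_forward h (by omega) ha hab hlt
  set zi : Fin (Nat.card V) := ⟨k + 1, by omega⟩ with hzi
  have hz2 := (h zi).2 (by simp [hzi])
  set B : Set V := {u | G.Adj (σ zi) u ∧ ((σ.symm u : Fin (Nat.card V)) : ℕ) < (zi : ℕ)} with hB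
  set P : Set V := σ '' {j : Fin (Nat.card V) | (j : ℕ) < k + 1} with hP
  have hPcard : P.ncard = k + 1 := by
    rw [hP, Set.ncard_image_of_injective _ σ.injective, ncard_val_lt (k + 1) (by omega)]
  have hBP : B ⊆ P := by
    intro u hu
    exact ⟨σ.symm u, by simpa [hzi] using hu.2, σ.apply_symm_apply u⟩
  have hnotB : ∀ c : V, IsKSimplicial G k c →
      ((σ.symm c : Fin (Nat.card V)) : ℕ) ≤ k → c ∉ B := by
    intro c hc hck hcB
    have hzz : ((σ.symm (σ zi) : Fin (Nat.card V)) : ℕ) = k + 1 := by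
      simp [hzi]
    have hfor := simplicial_forward h (by omega) hc hcB.1.symm (by omega)
    omega
  have haB : a ∉ B := hnotB a ha (by omega)
  have hbB : b ∉ B := hnotB b hb hbk
  have haP : a ∈ P := ⟨σ.symm a, by simp; omega, σ.apply_symm_apply a⟩
  have hbP : b ∈ P := ⟨σ.symm b, by simp; omega, σ.apply_symm_apply b⟩
  have hdcard : (P \ B).ncard = 1 := by
    rw [Set.ncard_diff hBP (Set.toFinite _), hPcard, hz2.1]
    omega
  have hpair : {a, b} ⊆ P \ B := by
    intro c hc
    rcases hc with rfl | hc
    · exact ⟨haP, haB⟩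
    · rcases hc with rfl
      exact ⟨hbP, hbB⟩
  have hne : a ≠ b := G.ne_of_adj hab
  have h2 : ({a, b} : Set V).ncard = 2 := Set.ncard_pair hne
  have := Set.ncard_le_ncard hpair (Set.toFinite _)
  omega

/-- Every `k`-tree has a simplicial vertex (the last one in the ordering). -/
lemma exists_simplicial (hn : k + 1 ≤ Nat.card V) (h : KOrd k G σ) :
    ∃ z : V, IsKSimplicial G k z := by
  set li : Fin (Nat.card V) := ⟨Nat.card V - 1, by omega⟩ with hli
  refine ⟨σ li, ?_⟩
  by_cases hcase : (li : ℕ) ≤ k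
  · -- n = k + 1
    have hnk : Nat.card V - 1 = k := by
      have : (li : ℕ) = Nat.card V - 1 := rfl
      omega
    have hNeq : G.neighborSet (σ li) = {u | ((σ.symm u : Fin (Nat.card V)) : ℕ) < Nat.card V - 1} := by
      ext u
      constructor
      · intro hu
        have hne : σ.symm u ≠ li := by
          intro hc
          have : u = σ li := by simpa using congrArg σ hc
          exact G.ne_of_adj hu (this.symm)
        have : ((σ.symm u : Fin (Nat.card V)) : ℕ) ≠ Nat.card V - 1 := fun hc => hne (Fin.ext hc)
        have hlt := (σ.symm u).isLt
        simp only [Set.mem_setOf_eq]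
        omega
      · intro hu
        exact adj_of_lt h hcase hu
    constructor
    · rw [hNeq]
      intro a ha b hb hne
      have := block_adj h (i := σ.symm a) (j := σ.symm b)
        (by have := ha; simp only [Set.mem_setOf_eq] at this; omega)
        (by have := hb; simp only [Set.mem_setOf_eq] at this; omega)
        (fun e => hne (by simpa using congrArg σ e))
      simpa using this
    · rw [hNeq]
      have : {u | ((σ.symm u : Fin (Nat.card V)) : ℕ) < Nat.card V - 1} =
          σ '' {j : Fin (Nat.card V) | (j : ℕ) < Nat.card V - 1} := by
        ext u
        constructor
        · intro hu; exact ⟨σ.symm u, hu, σ.apply_symm_apply u⟩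
        · rintro ⟨j, hj, rfl⟩; simpa using hj
      rw [this, Set.ncard_image_of_injective _ σ.injective, ncard_val_lt (Nat.card V - 1) (by omega), hnk]
  · push_neg at hcase
    obtain ⟨hcard, hclique⟩ := (h li).2 hcase
    have hNeq : G.neighborSet (σ li) =
        {u | G.Adj (σ li) u ∧ ((σ.symm u : Fin (Nat.card V)) : ℕ) < (li : ℕ)} := by
      ext u
      constructor
      · intro hu
        refine ⟨hu, ?_⟩
        have hne : σ.symm u ≠ li := by
          intro hc
          have : u = σ li := by simpa using congrArg σ hc
          exact G.ne_of_adj hu (this.symm)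
        have : ((σ.symm u : Fin (Nat.card V)) : ℕ) ≠ Nat.card V - 1 := fun hc => hne (Fin.ext hc)
        have hlt := (σ.symm u).isLt
        have : (li : ℕ) = Nat.card V - 1 := rfl
        omega
      · intro hu; exact hu.1
    exact ⟨by rw [hNeq]; exact hclique, by rw [hNeq]; exact hcard⟩

end KTreeAux

namespace KTreeAux
open Set
variable {V : Type*} [Finite V] {k : ℕ} {G : SimpleGraph V}

set_option maxHeartbeats 1000000 in
/-- Deleting a set of simplicial vertices from a `k`-tree leaves a `k`-tree,
provided at least `k+1` vertices remain. -/
lemma deletion (h : IsKTree k G) (S : Set V)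
    (hS : ∀ w ∈ S, IsKSimplicial G k w) (hcard : k + 1 ≤ Nat.card ↥(Sᶜ)) :
    IsKTree k (G.induce Sᶜ) := by
  classical
  obtain ⟨hn, σ, hσ⟩ := h
  have hft := Fintype.ofFinite V
  set T : Finset (Fin (Nat.card V)) := Finset.univ.filter (fun i => σ i ∈ Sᶜ) with hT
  have hmemT : ∀ i, i ∈ T ↔ σ i ∈ Sᶜ := by intro i; simp [hT]
  have hTeq : T = Finset.image (fun u : V => σ.symm u) (Finset.univ.filter (fun u => u ∈ Sᶜ)) := by
    ext i
    simp only [hT, Finset.mem_filter, Finset.mem_univ, true_and, Finset.mem_image]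
    constructor
    · intro hi; exact ⟨σ i, hi, by simp⟩
    · rintro ⟨u, hu, rfl⟩; simpa using hu
  have hTcard : T.card = Nat.card ↥(Sᶜ) := by
    rw [hTeq, Finset.card_image_of_injective _ σ.symm.injective, Nat.card_eq_fintype_card,
      Fintype.card_subtype]
  set e : Fin (Nat.card ↥(Sᶜ)) ≃o ↥T := T.orderIsoOfFin hTcard with he
  set τ : Fin (Nat.card ↥(Sᶜ)) ≃ ↥(Sᶜ) :=
    { toFun := fun j => ⟨σ (e j), (hmemT _).1 (e j).2⟩
      invFun := fun u => e.symm ⟨σ.symm u.val, (hmemT _).2 (by simpa using u.2)⟩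
      left_inv := fun j => by
        simp only [Equiv.symm_apply_apply, Subtype.coe_eta]
        exact e.symm_apply_apply j
      right_inv := fun u => by
        ext
        simp only []
        rw [show (⟨σ.symm u.val, _⟩ : ↥T) = e (e.symm ⟨σ.symm u.val, (hmemT _).2 (by simpa using u.2)⟩) from (e.apply_symm_apply _).symm]
        rw [e.apply_symm_apply, e.apply_symm_apply]
        simp } with hτ
  have hτval : ∀ j, (τ j).val = σ (e j) := fun j => rfl
  have hτsymm : ∀ u : ↥(Sᶜ), τ.symm u = e.symm ⟨σ.symm u.val, (hmemT _).2 (by simpa using u.2)⟩ :=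
    fun u => rfl
  have hmono : ∀ u u' : ↥(Sᶜ),
      (((τ.symm u : Fin (Nat.card ↥(Sᶜ))) : ℕ) < ((τ.symm u' : Fin (Nat.card ↥(Sᶜ))) : ℕ)) ↔
      ((σ.symm u.val : Fin (Nat.card V)) : ℕ) < ((σ.symm u'.val : Fin (Nat.card V)) : ℕ) := by
    intro u u'
    rw [← Fin.lt_def, hτsymm, hτsymm, e.symm.lt_iff_lt, Subtype.mk_lt_mk, Fin.lt_def]
  -- counting: number of new-earlier vertices is the new index
  have hcount : ∀ j : Fin (Nat.card ↥(Sᶜ)),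
      {u : ↥(Sᶜ) | ((τ.symm u : Fin (Nat.card ↥(Sᶜ))) : ℕ) < (j : ℕ)}.ncard = (j : ℕ) := by
    intro j
    have himg : {u : ↥(Sᶜ) | ((τ.symm u : Fin (Nat.card ↥(Sᶜ))) : ℕ) < (j : ℕ)} =
        τ '' {a : Fin (Nat.card ↥(Sᶜ)) | (a : ℕ) < (j : ℕ)} := by
      ext u
      constructor
      · intro hu; exact ⟨τ.symm u, hu, τ.apply_symm_apply u⟩
      · rintro ⟨a, ha, rfl⟩; rw [Set.mem_setOf_eq, Equiv.symm_apply_apply]; exact ha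
    rw [himg, Set.ncard_image_of_injective _ τ.injective, ncard_val_lt _ j.isLt.le]
  refine ⟨hcard, τ, ?_⟩
  intro j
  set x : ↥(Sᶜ) := τ j with hx
  set i : Fin (Nat.card V) := σ.symm x.val with hi
  have hσi : σ i = x.val := σ.apply_symm_apply x.val
  have hτjx : τ.symm x = j := Equiv.symm_apply_apply τ j
  -- new-earlier iff old-earlier
  have hear : ∀ u : ↥(Sᶜ), (((τ.symm u : Fin (Nat.card ↥(Sᶜ))) : ℕ) < (j : ℕ)) ↔
      ((σ.symm u.val : Fin (Nat.card V)) : ℕ) < (i : ℕ) := by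
    intro u
    rw [← hτjx]
    exact hmono u x
  have hadj' : ∀ u : ↥(Sᶜ), (G.induce Sᶜ).Adj (τ j) u ↔ G.Adj (σ i) u.val := by
    intro u
    rw [hσi]
    simp [hx]
  -- j ≤ i
  have hji : (j : ℕ) ≤ (i : ℕ) := by
    have h1 : Subtype.val '' {u : ↥(Sᶜ) | ((τ.symm u : Fin (Nat.card ↥(Sᶜ))) : ℕ) < (j : ℕ)} ⊆
        {w : V | ((σ.symm w : Fin (Nat.card V)) : ℕ) < (i : ℕ)} := by
      rintro _ ⟨u, hu, rfl⟩
      exact (hear u).1 hu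
    have h2 : {w : V | ((σ.symm w : Fin (Nat.card V)) : ℕ) < (i : ℕ)}.ncard = (i : ℕ) := by
      have : {w : V | ((σ.symm w : Fin (Nat.card V)) : ℕ) < (i : ℕ)} =
          σ '' {a : Fin (Nat.card V) | (a : ℕ) < (i : ℕ)} := by
        ext w
        constructor
        · intro hw; exact ⟨σ.symm w, hw, σ.apply_symm_apply w⟩
        · rintro ⟨a, ha, rfl⟩; simpa using ha
      rw [this, Set.ncard_image_of_injective _ σ.injective, ncard_val_lt _ i.isLt.le]
    calc (j : ℕ) = {u : ↥(Sᶜ) | ((τ.symm u : Fin (Nat.card ↥(Sᶜ))) : ℕ) < (j : ℕ)}.ncard :=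
          (hcount j).symm
      _ = (Subtype.val '' {u : ↥(Sᶜ) | ((τ.symm u : Fin (Nat.card ↥(Sᶜ))) : ℕ) < (j : ℕ)}).ncard :=
          (Set.ncard_image_of_injective _ Subtype.val_injective).symm
      _ ≤ {w : V | ((σ.symm w : Fin (Nat.card V)) : ℕ) < (i : ℕ)}.ncard :=
          Set.ncard_le_ncard h1 (Set.toFinite _)
      _ = (i : ℕ) := h2
  -- old back-neighborhood avoids S (when i is beyond the first block)
  have hBS : k < (i : ℕ) → ∀ u ∈ {u | G.Adj (σ i) u ∧ ((σ.symm u : Fin (Nat.card V)) : ℕ) < (i : ℕ)},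
      u ∉ S := by
    intro hik u hu huS
    have hadj2 : G.Adj u x.val := by rw [← hσi]; exact hu.1.symm
    have hlt2 : ((σ.symm u : Fin (Nat.card V)) : ℕ) <
        ((σ.symm x.val : Fin (Nat.card V)) : ℕ) := hu.2
    have hfor := simplicial_forward hσ hn (hS u huS) hadj2 hlt2
    rw [hi] at hik
    omega
  constructor
  · -- first block condition
    intro hjk
    ext u
    simp only [Set.mem_setOf_eq]
    constructor
    · intro hu; exact hu.2
    · intro hu
      refine ⟨?_, hu⟩
      by_cases hik : (i : ℕ) ≤ k
      · rw [hadj' u]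
        exact adj_of_lt hσ hik ((hear u).1 hu)
      · push_neg at hik
        obtain ⟨hBcard, _⟩ := (hσ i).2 hik
        set E' : Set V := {w : V | w ∈ Sᶜ ∧ ((σ.symm w : Fin (Nat.card V)) : ℕ) < (i : ℕ)} with hE'
        have hE'card : E'.ncard = (j : ℕ) := by
          have himg2 : E' = Subtype.val ''
              {u : ↥(Sᶜ) | ((τ.symm u : Fin (Nat.card ↥(Sᶜ))) : ℕ) < (j : ℕ)} := by
            ext w
            constructor
            · intro hw; exact ⟨⟨w, hw.1⟩, (hear ⟨w, hw.1⟩).2 hw.2, rfl⟩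
            · rintro ⟨u2, hu2, rfl⟩; exact ⟨u2.2, (hear u2).1 hu2⟩
          rw [himg2, Set.ncard_image_of_injective _ Subtype.val_injective, hcount j]
        have hBsub : {u | G.Adj (σ i) u ∧ ((σ.symm u : Fin (Nat.card V)) : ℕ) < (i : ℕ)} ⊆ E' := by
          intro w hw
          exact ⟨hBS hik w hw, hw.2⟩
        have hBeq : {u | G.Adj (σ i) u ∧ ((σ.symm u : Fin (Nat.card V)) : ℕ) < (i : ℕ)} = E' :=
          Set.eq_of_subset_of_ncard_le hBsub (by rw [hE'card, hBcard]; omega) (Set.toFinite _)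
        have huE' : u.val ∈ E' := ⟨u.2, (hear u).1 hu⟩
        rw [← hBeq] at huE'
        rw [hadj' u]
        exact huE'.1
  · -- later vertices
    intro hjk
    have hik : k < (i : ℕ) := lt_of_lt_of_le hjk hji
    obtain ⟨hBcard, hBclique⟩ := (hσ i).2 hik
    have himg : Subtype.val '' {u : ↥(Sᶜ) | (G.induce Sᶜ).Adj (τ j) u ∧
        ((τ.symm u : Fin (Nat.card ↥(Sᶜ))) : ℕ) < (j : ℕ)} =
        {u | G.Adj (σ i) u ∧ ((σ.symm u : Fin (Nat.card V)) : ℕ) < (i : ℕ)} := by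
      ext w
      constructor
      · rintro ⟨u, hu, rfl⟩
        exact ⟨(hadj' u).1 hu.1, (hear u).1 hu.2⟩
      · intro hw
        have hwS : w ∉ S := hBS hik w hw
        refine ⟨⟨w, hwS⟩, ⟨?_, ?_⟩, rfl⟩
        · exact (hadj' ⟨w, hwS⟩).2 hw.1
        · exact (hear ⟨w, hwS⟩).2 hw.2
    constructor
    · rw [← Set.ncard_image_of_injective _ Subtype.val_injective, himg, hBcard]
    · intro a ha b hb hne
      have haB : a.val ∈ {u | G.Adj (σ i) u ∧ ((σ.symm u : Fin (Nat.card V)) : ℕ) < (i : ℕ)} := by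
        rw [← himg]; exact ⟨a, ha, rfl⟩
      have hbB : b.val ∈ {u | G.Adj (σ i) u ∧ ((σ.symm u : Fin (Nat.card V)) : ℕ) < (i : ℕ)} := by
        rw [← himg]; exact ⟨b, hb, rfl⟩
      have := hBclique haB hbB (Subtype.coe_injective.ne hne)
      simpa using this

/-- A clique on `k` vertices induces a graph isomorphic to `K_k`. -/
lemma iso_top (k : ℕ) {s : Set V} (hcl : G.IsClique s) (hcard : Nat.card ↥s = k) :
    Nonempty ((G.induce s) ≃g (⊤ : SimpleGraph (Fin k))) := by
  classical
  have := Fintype.ofFinite ↥s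
  have hc : Fintype.card ↥s = k := by rw [← Nat.card_eq_fintype_card]; exact hcard
  set f := Fintype.equivFinOfCardEq hc with hf
  refine ⟨⟨f, ?_⟩⟩
  intro a b
  have hiff : (G.induce s).Adj a b ↔ G.Adj a.val b.val := by simp
  rw [SimpleGraph.top_adj, hiff]
  constructor
  · intro hne
    have hab : a ≠ b := fun h2 => hne (congrArg f h2)
    have hvne : a.val ≠ b.val := fun h2 => hab (Subtype.ext h2)
    exact hcl a.2 b.2 hvne
  · intro hadj
    exact f.injective.ne (fun h2 => G.ne_of_adj hadj (congrArg Subtype.val h2))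

end KTreeAux

/-- Lemma 11 (Partition) of Dujmović–Wood. -/
theorem ktree_partition_lemma {V : Type*} [Finite V] (k : ℕ) (hk : 1 ≤ k)
    (G : SimpleGraph V) (h : IsKTree k G) :
    ∃ S : Set V, S.Nonempty ∧ (∀ v ∈ S, IsKSimplicial G k v) ∧
      (∀ u ∈ S, ∀ w ∈ S, ¬ G.Adj u w) ∧
      (Nonempty ((G.induce Sᶜ) ≃g (⊤ : SimpleGraph (Fin k))) ∨
        (IsKTree k (G.induce Sᶜ) ∧
          ∃ v, v ∉ S ∧ G.IsClique (G.neighborSet v \ S) ∧ (G.neighborSet v \ S).ncard = k ∧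
            (∀ w ∈ S, ∃! u, u ∈ G.neighborSet v \ S ∧
              G.neighborSet w = insert v (G.neighborSet v \ S) \ {u}) ∧
            (∀ x, IsKSimplicial G k x → x ∉ S → ¬ G.Adj x v))) := by
  classical
  obtain ⟨hn, σ, hσ⟩ := h
  by_cases hsmall : Nat.card V ≤ k + 1
  · -- n = k + 1 : take the single simplicial vertex, rest is K_k
    obtain ⟨z, hz⟩ := KTreeAux.exists_simplicial hn hσ
    refine ⟨{z}, ⟨z, rfl⟩, ?_, ?_, Or.inl ?_⟩
    · intro v hv; rw [Set.mem_singleton_iff] at hv; subst hv; exact hz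
    · intro u hu w hw
      rw [Set.mem_singleton_iff] at hu hw; subst hu; subst hw
      exact G.irrefl
    · have hsub : G.neighborSet z ⊆ ({z}ᶜ : Set V) := by
        intro u hu
        simp only [Set.mem_compl_iff, Set.mem_singleton_iff]
        exact fun h2 => G.ne_of_adj hu h2.symm
      have hcc : ({z}ᶜ : Set V).ncard = k := by
        rw [Set.compl_eq_univ_diff, Set.ncard_diff (Set.subset_univ _) (Set.toFinite _),
          Set.ncard_univ, Set.ncard_singleton]
        omega
      have heq : G.neighborSet z = ({z}ᶜ : Set V) :=
        Set.eq_of_subset_of_ncard_le hsub (by rw [hcc, hz.2]) (Set.toFinite _)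
      exact KTreeAux.iso_top k (heq ▸ hz.1) (by rw [Nat.card_coe_set_eq, hcc])
  · push_neg at hsmall
    have hn2 : k + 2 ≤ Nat.card V := hsmall
    set R : Set V := {w | IsKSimplicial G k w} with hR
    obtain ⟨z, hz⟩ := KTreeAux.exists_simplicial hn hσ
    have hindep : ∀ w ∈ R, ∀ w' ∈ R, ¬ G.Adj w w' := fun w hw w' hw' hadj =>
      KTreeAux.simplicial_indep hσ hn2 hw hw' hadj
    have hNzR : G.neighborSet z ⊆ Rᶜ := fun u hu hcontra => hindep z hz u hcontra hu
    have hRc_ge : k ≤ Rᶜ.ncard := by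
      rw [← hz.2]; exact Set.ncard_le_ncard hNzR (Set.toFinite _)
    by_cases hRk : Rᶜ.ncard = k
    · -- case (a) with S = R
      have hNzeq : G.neighborSet z = Rᶜ :=
        Set.eq_of_subset_of_ncard_le hNzR (by rw [hRk, hz.2]) (Set.toFinite _)
      refine ⟨R, ⟨z, hz⟩, fun v hv => hv, hindep, Or.inl ?_⟩
      exact KTreeAux.iso_top k (hNzeq ▸ hz.1) (by rw [Nat.card_coe_set_eq, hRk])
    · -- case (b)
      have hRc : k + 1 ≤ Nat.card ↥(Rᶜ) := by
        rw [Nat.card_coe_set_eq]; omega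
      have hGR : IsKTree k (G.induce Rᶜ) := KTreeAux.deletion ⟨hn, σ, hσ⟩ R (fun w hw => hw) hRc
      obtain ⟨hn', σ', hσ'⟩ := hGR
      obtain ⟨v', hv'⟩ := KTreeAux.exists_simplicial hn' hσ'
      set v : V := v'.val with hvdef
      have hvnotR : v ∉ R := v'.2
      have himg : Subtype.val '' ((G.induce Rᶜ).neighborSet v') = G.neighborSet v \ R := by
        ext u
        constructor
        · rintro ⟨a, ha, rfl⟩
          rw [SimpleGraph.mem_neighborSet] at ha
          have hadj : G.Adj v a.val := by simpa using ha
          exact ⟨hadj, a.2⟩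
        · rintro ⟨hu1, hu2⟩
          refine ⟨⟨u, hu2⟩, ?_, rfl⟩
          rw [SimpleGraph.mem_neighborSet]
          simpa using hu1
      have hclique : G.IsClique (G.neighborSet v \ R) := by
        intro a ha b hb hne
        have haN : (⟨a, ha.2⟩ : ↥(Rᶜ)) ∈ (G.induce Rᶜ).neighborSet v' := by
          rw [SimpleGraph.mem_neighborSet]; simpa using ha.1
        have hbN : (⟨b, hb.2⟩ : ↥(Rᶜ)) ∈ (G.induce Rᶜ).neighborSet v' := by
          rw [SimpleGraph.mem_neighborSet]; simpa using hb.1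
        have := hv'.1 haN hbN (fun h2 => hne (congrArg Subtype.val h2))
        simpa using this
      have hcardNvR : (G.neighborSet v \ R).ncard = k := by
        rw [← himg, Set.ncard_image_of_injective _ Subtype.val_injective]
        exact hv'.2
      set S : Set V := G.neighborSet v ∩ R with hSdef
      have hSsub : S ⊆ R := Set.inter_subset_right
      have hdiff : G.neighborSet v \ S = G.neighborSet v \ R := by
        ext u
        simp only [hSdef, Set.mem_diff, Set.mem_inter_iff]
        tauto
      have hSne : S.Nonempty := by
        by_contra he
        rw [Set.not_nonempty_iff_eq_empty] at he
        have hNd : G.neighborSet v \ R = G.neighborSet v := by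
          ext u
          simp only [Set.mem_diff]
          refine ⟨fun hu => hu.1, fun hu => ⟨hu, fun huR => ?_⟩⟩
          have : u ∈ S := ⟨hu, huR⟩
          rw [he] at this
          exact this
        exact hvnotR ⟨hNd ▸ hclique, hNd ▸ hcardNvR⟩
      refine ⟨S, hSne, fun w hw => hSsub hw, fun u hu w hw => hindep u (hSsub hu) w (hSsub hw),
        Or.inr ⟨?_, v, ?_, hdiff ▸ hclique, hdiff ▸ hcardNvR, ?_, ?_⟩⟩
      · -- G \ S is a k-tree
        apply KTreeAux.deletion ⟨hn, σ, hσ⟩ S (fun w hw => hSsub hw)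
        have hsub2 : Rᶜ ⊆ Sᶜ := Set.compl_subset_compl.2 hSsub
        rw [Nat.card_coe_set_eq] at hRc ⊢
        exact le_trans hRc (Set.ncard_le_ncard hsub2 (Set.toFinite _))
      · exact fun hvS => hvnotR (hSsub hvS)
      · -- the ∃! condition
        intro w hw
        obtain ⟨hwv, hwR⟩ := hw
        have hadjvw : G.Adj v w := hwv
        have hvNw : v ∈ G.neighborSet w := hadjvw.symm
        have hNwsub : G.neighborSet w \ {v} ⊆ G.neighborSet v \ R := by
          rintro x ⟨hx, hxv⟩
          rw [Set.mem_singleton_iff] at hxv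
          refine ⟨?_, ?_⟩
          · exact hwR.1 hvNw hx (fun h2 => hxv h2.symm)
          · intro hxR
            exact hindep w hwR x hxR hx
        have hvA : v ∉ G.neighborSet v \ R := fun h2 => G.irrefl h2.1
        have hcard2 : (G.neighborSet w \ {v}).ncard = k - 1 := by
          rw [Set.ncard_diff_singleton_of_mem hvNw, hwR.2]
        have hone : ((G.neighborSet v \ R) \ (G.neighborSet w \ {v})).ncard = 1 := by
          rw [Set.ncard_diff hNwsub (Set.toFinite _), hcardNvR, hcard2]
          omega
        obtain ⟨u, hu⟩ := Set.ncard_eq_one.mp hone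
        have huA : u ∈ G.neighborSet v \ R := by
          have : u ∈ ((G.neighborSet v \ R) \ (G.neighborSet w \ {v})) := by rw [hu]; rfl
          exact this.1
        have huNw : u ∉ G.neighborSet w := by
          have h2 : u ∈ ((G.neighborSet v \ R) \ (G.neighborSet w \ {v})) := by rw [hu]; rfl
          intro h3
          have huv : u ≠ v := fun h4 => G.irrefl (h4 ▸ huA.1)
          exact h2.2 ⟨h3, huv⟩
        have huv : u ≠ v := fun h4 => G.irrefl (h4 ▸ huA.1)
        have hkey : G.neighborSet w = insert v (G.neighborSet v \ R) \ {u} := by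
          have hsub3 : G.neighborSet w ⊆ insert v (G.neighborSet v \ R) \ {u} := by
            intro x hx
            by_cases hxv : x = v
            · subst hxv
              exact ⟨Set.mem_insert _ _, fun h2 => huv (Set.mem_singleton_iff.1 h2).symm⟩
            · have hxA : x ∈ G.neighborSet v \ R := hNwsub ⟨hx, hxv⟩
              refine ⟨Set.mem_insert_of_mem _ hxA, ?_⟩
              intro h2
              rw [Set.mem_singleton_iff] at h2
              subst h2
              exact huNw hx
          have hcardins : (insert v (G.neighborSet v \ R) \ {u}).ncard = k := by
            rw [Set.ncard_diff_singleton_of_mem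
                (Set.mem_insert_of_mem _ huA),
              Set.ncard_insert_of_notMem hvA (Set.toFinite _), hcardNvR]
            omega
          exact (Set.eq_of_subset_of_ncard_le hsub3
            (by rw [hcardins, hwR.2]) (Set.toFinite _))
        rw [hdiff]
        refine ⟨u, ⟨huA, hkey⟩, ?_⟩
        rintro u2 ⟨hu2A, hkey2⟩
        by_contra hne2
        have hu2ins : u2 ∈ insert v (G.neighborSet v \ R) := Set.mem_insert_of_mem _ hu2A
        have : u2 ∈ G.neighborSet w := by
          rw [hkey]
          exact ⟨hu2ins, fun h2 => hne2 (Set.mem_singleton_iff.1 h2)⟩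
        rw [hkey2] at this
        exact this.2 rfl
      · -- simplicial outside S not adjacent to v
        intro x hx hxS hadj
        exact hxS ⟨hadj.symm, hx⟩
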